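/- Let A be an n×n block lower triangular matrix with square diagonal blocks X_1,…,X_r of sizes k_1,…,k_r (∑ k_j = n), and let E_j be the block elementary factor of A by columns (coinciding with A on the columns of block j and with the identity elsewhere). If X_j is invertible then E_j is invertible with E_j⁻¹ = I − (E_j − I)·Diag(I_{m_j}, X_j⁻¹, I_{p_j}), where m_j = k_1 + ⋯ + k_{j−1} and p_j = n − m_j − k_j; and if all X_j are invertible then A⁻¹ = E_r⁻¹ E_{r−1}⁻¹ ⋯ E_1⁻¹. -/

import Mathlib

/-- The block elementary factor (by columns) `E_j` of a block matrix `A`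
indexed by `Σ j : Fin r, Fin (k j)`. -/
def blockElem {r : ℕ} {k : Fin r → ℕ}
    (A : Matrix ((j : Fin r) × Fin (k j)) ((j : Fin r) × Fin (k j)) ℂ) (j : Fin r) :
    Matrix ((j : Fin r) × Fin (k j)) ((j : Fin r) × Fin (k j)) ℂ :=
  Matrix.of fun p q => if q.1 = j then A p q else if p = q then 1 else 0

/-- The `j`-th diagonal block `X_j` of `A`. -/
def diagBlock {r : ℕ} {k : Fin r → ℕ}
    (A : Matrix ((j : Fin r) × Fin (k j)) ((j : Fin r) × Fin (k j)) ℂ) (j : Fin r) :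
    Matrix (Fin (k j)) (Fin (k j)) ℂ :=
  Matrix.of fun a b => A ⟨j, a⟩ ⟨j, b⟩

/-- Embedding of a `k j × k j` matrix as the `j`-th diagonal block of a big
block matrix (all other entries zero). -/
def embedBlock {r : ℕ} {k : Fin r → ℕ} (j : Fin r)
    (M : Matrix (Fin (k j)) (Fin (k j)) ℂ) :
    Matrix ((j : Fin r) × Fin (k j)) ((j : Fin r) × Fin (k j)) ℂ :=
  Matrix.of fun p q =>
    if hp : p.1 = j then
      if hq : q.1 = j then M (Fin.cast (congrArg k hp) p.2) (Fin.cast (congrArg k hq) q.2)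
      else 0
    else 0

section
variable {r : ℕ} {k : Fin r → ℕ}
  (A : Matrix ((j : Fin r) × Fin (k j)) ((j : Fin r) × Fin (k j)) ℂ) (j : Fin r)

/-- D = block diagonal with X⁻¹ in slot j, identity elsewhere -/
noncomputable def dMat : Matrix ((j : Fin r) × Fin (k j)) ((j : Fin r) × Fin (k j)) ℂ :=
  1 - embedBlock j (1 : Matrix (Fin (k j)) (Fin (k j)) ℂ) + embedBlock j (diagBlock A j)⁻¹

lemma embedBlock_apply_ne_left (M : Matrix (Fin (k j)) (Fin (k j)) ℂ)
    (p q : (j : Fin r) × Fin (k j)) (hp : p.1 ≠ j) : embedBlock j M p q = 0 := by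
  simp [embedBlock, hp]

lemma embedBlock_apply_ne_right (M : Matrix (Fin (k j)) (Fin (k j)) ℂ)
    (p q : (j : Fin r) × Fin (k j)) (hq : q.1 ≠ j) : embedBlock j M p q = 0 := by
  simp [embedBlock, hq]

lemma embedBlock_apply_mk (M : Matrix (Fin (k j)) (Fin (k j)) ℂ)
    (a b : Fin (k j)) : embedBlock j M ⟨j, a⟩ ⟨j, b⟩ = M a b := by
  simp [embedBlock]

lemma dMat_apply_ne_left (p q : (j : Fin r) × Fin (k j)) (hp : p.1 ≠ j) :
    dMat A j p q = if p = q then 1 else 0 := by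
  simp [dMat, embedBlock_apply_ne_left _ _ _ _ hp, Matrix.one_apply]

lemma dMat_apply_ne_right (p q : (j : Fin r) × Fin (k j)) (hq : q.1 ≠ j) :
    dMat A j p q = if p = q then 1 else 0 := by
  simp [dMat, embedBlock_apply_ne_right _ _ _ _ hq, Matrix.one_apply]

lemma dMat_apply_left_ne (p q : (j : Fin r) × Fin (k j)) (hp : p.1 = j) (hq : q.1 ≠ j) :
    dMat A j p q = 0 := by
  rw [dMat_apply_ne_right A j p q hq, if_neg]
  rintro rfl; exact hq hp

lemma dMat_apply_mk (a b : Fin (k j)) :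
    dMat A j ⟨j, a⟩ ⟨j, b⟩ = (diagBlock A j)⁻¹ a b := by
  simp [dMat, embedBlock_apply_mk, Matrix.one_apply]

end

section
variable {r : ℕ} {k : Fin r → ℕ}
  {A : Matrix ((j : Fin r) × Fin (k j)) ((j : Fin r) × Fin (k j)) ℂ} {j : Fin r}

lemma ED_col_ne (p q : (j : Fin r) × Fin (k j)) (hq : q.1 ≠ j) :
    (blockElem A j * dMat A j) p q = (1 : Matrix _ _ ℂ) p q := by
  rw [Matrix.mul_apply]
  simp_rw [fun s => dMat_apply_ne_right A j s q hq, mul_ite, mul_one, mul_zero,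
    Finset.sum_ite_eq', Finset.mem_univ, if_pos]
  simp [blockElem, hq, Matrix.one_apply]

lemma ED_row_le (hA : ∀ p q : (j : Fin r) × Fin (k j), p.1 < q.1 → A p q = 0)
    (hXinv : diagBlock A j * (diagBlock A j)⁻¹ = 1)
    (p q : (j : Fin r) × Fin (k j)) (hq : q.1 = j) (hp : ¬ j < p.1) :
    (blockElem A j * dMat A j) p q = (1 : Matrix _ _ ℂ) p q := by
  obtain ⟨b, rfl⟩ : ∃ b : Fin (k j), q = ⟨j, b⟩ := by
    obtain ⟨jq, b⟩ := q; cases hq; exact ⟨b, rfl⟩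
  rw [Matrix.mul_apply, ← Finset.univ_sigma_univ, Finset.sum_sigma]
  rw [Finset.sum_eq_single j]
  · have h1 : ∀ a : Fin (k j), blockElem A j p ⟨j, a⟩ * dMat A j ⟨j, a⟩ ⟨j, b⟩
        = A p ⟨j, a⟩ * (diagBlock A j)⁻¹ a b := by
      intro a
      rw [dMat_apply_mk]
      simp [blockElem]
    simp_rw [h1]
    rcases lt_or_eq_of_le (not_lt.mp hp) with hlt | heq
    · rw [Finset.sum_eq_zero fun a _ => by rw [hA p ⟨j, a⟩ hlt, zero_mul]]
      rw [Matrix.one_apply_ne]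
      rintro rfl; exact absurd rfl (ne_of_lt hlt)
    · obtain ⟨c, rfl⟩ : ∃ c : Fin (k j), p = ⟨j, c⟩ := by
        obtain ⟨jp, c⟩ := p; cases heq; exact ⟨c, rfl⟩
      have h2 : ∀ a : Fin (k j), A ⟨j, c⟩ ⟨j, a⟩ = diagBlock A j c a := fun a => rfl
      simp_rw [h2, ← Matrix.mul_apply, hXinv]
      simp [Matrix.one_apply, Sigma.mk.inj_iff]
  · intro i _ hi
    exact Finset.sum_eq_zero fun a _ => by
      rw [dMat_apply_ne_left A j ⟨i, a⟩ ⟨j, b⟩ hi, if_neg (by simp [Sigma.mk.inj_iff, hi]),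
        mul_zero]
  · intro h; exact absurd (Finset.mem_univ j) h

end


theorem stmt19 {r : ℕ} {k : Fin r → ℕ}
    (A : Matrix ((j : Fin r) × Fin (k j)) ((j : Fin r) × Fin (k j)) ℂ)
    (hA : ∀ p q : (j : Fin r) × Fin (k j), p.1 < q.1 → A p q = 0) :
    (∀ j : Fin r, IsUnit (diagBlock A j) →
        IsUnit (blockElem A j) ∧
          (blockElem A j)⁻¹ =
            1 - (blockElem A j - 1) *
              (1 - embedBlock j (1 : Matrix (Fin (k j)) (Fin (k j)) ℂ) +
                embedBlock j (diagBlock A j)⁻¹)) ∧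
      ((∀ j : Fin r, IsUnit (diagBlock A j)) →
        A⁻¹ = (List.ofFn fun j => (blockElem A j)⁻¹).reverse.prod) := by
  have main : ∀ j : Fin r, IsUnit (diagBlock A j) →
      blockElem A j * (1 - (blockElem A j - 1) * dMat A j) = 1 := by
    intro j hX
    have hXinv : diagBlock A j * (diagBlock A j)⁻¹ = 1 :=
      Matrix.mul_nonsing_inv _ ((Matrix.isUnit_iff_isUnit_det _).mp hX)
    set E := blockElem A j with hE
    set D := dMat A j with hD
    set L := E * D - 1 with hLdef
    have hF : E * D = 1 + L := by rw [hLdef]; abel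
    have hLq : ∀ p q, q.1 ≠ j → L p q = 0 := by
      intro p q hq
      simp [hLdef, Matrix.sub_apply, hE, hD, ED_col_ne p q hq]
    have hLp : ∀ p q, ¬ j < p.1 → L p q = 0 := by
      intro p q hp
      by_cases hq : q.1 = j
      · simp [hLdef, Matrix.sub_apply, hE, hD, ED_row_le hA hXinv p q hq hp]
      · exact hLq p q hq
    have hLL : L * L = 0 := by
      ext p q
      rw [Matrix.mul_apply, Matrix.zero_apply]
      refine Finset.sum_eq_zero fun s _ => ?_
      by_cases hs : s.1 = j
      · rw [hLp s q (by rw [hs]; exact lt_irrefl j), mul_zero]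
      · rw [hLq p s hs, zero_mul]
    have hDL : D * L = L := by
      ext p q
      rw [Matrix.mul_apply]
      by_cases hp : p.1 = j
      · rw [hLp p q (by rw [hp]; exact lt_irrefl j)]
        refine Finset.sum_eq_zero fun s _ => ?_
        by_cases hs : s.1 = j
        · rw [hLp s q (by rw [hs]; exact lt_irrefl j), mul_zero]
        · rw [hD, dMat_apply_left_ne A j p s hp hs, zero_mul]
      · simp_rw [hD, fun s => dMat_apply_ne_left A j p s hp, ite_mul, one_mul, zero_mul,
          Finset.sum_ite_eq, Finset.mem_univ, if_pos]
    have hEL : E * L = L := by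
      calc E * L = E * (D * L) := by rw [hDL]
        _ = (E * D) * L := by rw [Matrix.mul_assoc]
        _ = (1 + L) * L := by rw [hF]
        _ = L + L * L := by noncomm_ring
        _ = L := by rw [hLL, add_zero]
    have hEmD : (E - 1) * D = L + 1 - D := by
      have : (E - 1) * D = E * D - D := by noncomm_ring
      rw [this, hF]; abel
    rw [hEmD]
    have : (1 : Matrix _ _ ℂ) - (L + 1 - D) = D - L := by abel
    rw [this, Matrix.mul_sub, hEL, hF]
    abel
  constructor
  · intro j hX
    have hmul := main j hX
    refine ⟨⟨⟨_, _, hmul, mul_eq_one_comm.mp hmul⟩, rfl⟩, ?_⟩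
    exact Matrix.inv_eq_right_inv hmul
  · intro hall
    have hprod : (List.ofFn fun j => blockElem A j).prod = A := by
      have key : ∀ m, m ≤ r → ∀ p q : (j : Fin r) × Fin (k j),
          ((List.ofFn fun j => blockElem A j).take m).prod p q
            = if q.1.val < m then A p q else (1 : Matrix _ _ ℂ) p q := by
        intro m
        induction m with
        | zero => intro _ p q; simp
        | succ m ih =>
          intro hm p q
          have hmr : m < r := hm
          have hlen : m < (List.ofFn fun j => blockElem A j).length := by
            simpa using hmr
          rw [List.prod_take_succ _ m hlen, List.getElem_ofFn]
          have ihm := ih (le_of_lt hmr)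
          set jm : Fin r := ⟨m, by simpa using hmr⟩ with hjm
          rw [Matrix.mul_apply]
          by_cases hq : q.1 = jm
          · have hE : ∀ s, blockElem A jm s q = A s q := by
              intro s; simp [blockElem, hq]
            have hterm : ∀ s, ((List.ofFn fun j => blockElem A j).take m).prod p s
                * blockElem A jm s q = (if p = s then (1:ℂ) else 0) * A s q := by
              intro s
              rw [hE s, ihm p s]
              by_cases hs : s.1.val < m
              · rw [if_pos hs, hA s q (by rw [hq]; exact Fin.lt_def.mpr hs), mul_zero, mul_zero]
              · rw [if_neg hs, Matrix.one_apply]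
            simp_rw [hterm, ite_mul, one_mul, zero_mul, Finset.sum_ite_eq,
              Finset.mem_univ, if_pos]
            rw [if_pos (by rw [hq]; exact Nat.lt_succ_of_le le_rfl)]
          · have hE : ∀ s, blockElem A jm s q = if s = q then (1:ℂ) else 0 := by
              intro s; simp [blockElem, hq]
            simp_rw [hE, mul_ite, mul_one, mul_zero, Finset.sum_ite_eq',
              Finset.mem_univ, if_pos, ihm p q]
            have : q.1.val < m + 1 ↔ q.1.val < m := by
              constructor
              · intro h
                rcases Nat.lt_succ_iff_lt_or_eq.mp h with h | h
                · exact h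
                · exact absurd (Fin.ext h) hq
              · exact fun h => Nat.lt_succ_of_lt h
            rw [if_congr this rfl rfl]
      ext p q
      have := key r le_rfl p q
      rw [List.take_of_length_le (by simp)] at this
      rw [this, if_pos q.1.isLt]
    calc A⁻¹ = (List.ofFn fun j => blockElem A j).prod⁻¹ := by rw [hprod]
      _ = _ := by rw [Matrix.list_prod_inv_reverse, List.map_reverse, List.map_ofFn]; rfl
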